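/- arXiv:2504.13433 — 3 statements merged into one kernel-verified Lean document; each statement's English description precedes it below -/
import Mathlib

section
/- For every n ≥ 1, the length |P_n| of the pillar sequence P_n is odd. -/
/-- Generation operator: expand a run-length vector `R` starting with symbol `s`,
alternating between `s` and `4 - s` from run to run. -/
def G : List ℕ → ℕ → List ℕ
  | [], _ => []
  | r :: rs, s => List.replicate r s ++ G rs (4 - s)

/-- Pillar sequences: `P 1 = [3]`, `P (n+1) = G (P n) 3` for `n ≥ 1`. -/
def P : ℕ → List ℕ
  | 0 => []
  | 1 => [3]
  | n + 2 => G (P (n + 1)) 3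

/-- Block sequences: `B 1 = G [1,3,3,3,1] 1`, `B (n+1) = B n ++ P n ++ B n` for `n ≥ 1`. -/
def B : ℕ → List ℕ
  | 0 => []
  | 1 => G [1, 3, 3, 3, 1] 1
  | n + 2 => B (n + 1) ++ P (n + 1) ++ B (n + 1)

lemma G_length (R : List ℕ) : ∀ s, (G R s).length = R.sum := by
  induction R with
  | nil => intro s; simp [G]
  | cons r rs ih => intro s; simp [G, ih]

lemma G_mem (R : List ℕ) : ∀ s x, s ≤ 4 → x ∈ G R s → x = s ∨ x = 4 - s := by
  induction R with
  | nil => intro s x _ h; simp [G] at h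
  | cons r rs ih =>
    intro s x hs h
    simp [G] at h
    rcases h with ⟨_, h⟩ | h
    · exact Or.inl h
    · rcases ih (4 - s) x (by omega) h with h | h
      · exact Or.inr h
      · left; omega

lemma sum_mod_two (l : List ℕ) (h : ∀ x ∈ l, x % 2 = 1) :
    l.sum % 2 = l.length % 2 := by
  induction l with
  | nil => simp
  | cons a t ih =>
    have ha := h a (by simp)
    have ht := ih (fun x hx => h x (by simp [hx]))
    simp only [List.sum_cons, List.length_cons]
    omega

lemma P_key : ∀ n, 1 ≤ n → (P n).length % 2 = 1 ∧ ∀ x ∈ P n, x % 2 = 1 := by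
  intro n hn
  induction n with
  | zero => omega
  | succ m ih =>
    match m, ih with
    | 0, _ => refine ⟨by simp [P], ?_⟩; intro x hx; simp [P] at hx; omega
    | k + 1, ih =>
      obtain ⟨hlen, hmem⟩ := ih (by omega)
      constructor
      · rw [show P (k + 2) = G (P (k + 1)) 3 from rfl, G_length,
          sum_mod_two _ hmem]
        exact hlen
      · intro x hx
        rcases G_mem (P (k + 1)) 3 x (by omega) hx with h | h <;> omega

/-- For every `n ≥ 1`, the length of the pillar sequence `P n` is odd. -/
theorem pillar_length_odd : ∀ n : ℕ, 1 ≤ n → Odd (P n).length := by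
  intro n hn
  have := (P_key n hn).1
  exact Nat.odd_iff.mpr this
end

section
/- For every n ≥ 1, the last symbol of the pillar sequence P_n is 3 (in particular P_n is nonempty). -/
lemma mem_G : ∀ (R : List ℕ) (s x : ℕ), s ≤ 4 → x ∈ G R s → x = s ∨ x = 4 - s := by
  intro R
  induction R with
  | nil => intro s x _ h; simp [G] at h
  | cons r rs ih =>
    intro s x hs h
    simp only [G, List.mem_append] at h
    rcases h with h | h
    · left; exact (List.eq_of_mem_replicate h)
    · rcases ih (4 - s) x (by omega) h with h1 | h1
      · right; exact h1
      · left; omega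

lemma length_G : ∀ (R : List ℕ) (s : ℕ), (G R s).length = R.sum := by
  intro R
  induction R with
  | nil => intro s; simp [G]
  | cons r rs ih => intro s; simp [G, ih]

lemma sum_mod_two_s2 (R : List ℕ) (h : ∀ x ∈ R, x % 2 = 1) :
    R.sum % 2 = R.length % 2 := by
  induction R with
  | nil => simp
  | cons r rs ih =>
    have hr : r % 2 = 1 := h r (by simp)
    have := ih (fun x hx => h x (by simp [hx]))
    simp only [List.sum_cons, List.length_cons]
    omega

lemma replicate_last (r s : ℕ) (h : 0 < r) : (List.replicate r s).getLast? = some s := by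
  obtain ⟨k, rfl⟩ := Nat.exists_eq_add_of_lt h
  rw [zero_add, List.replicate_succ' (n := k) (a := s), List.getLast?_append_of_ne_nil _ (by simp)]
  simp

lemma lastG : ∀ (R : List ℕ) (s : ℕ), s ≤ 4 → R ≠ [] → (∀ x ∈ R, 0 < x) →
    (G R s).getLast? = some (if Odd R.length then s else 4 - s) := by
  intro R
  induction R with
  | nil => intro s _ h _; exact absurd rfl h
  | cons r rs ih =>
    intro s hs _ hpos
    rcases eq_or_ne rs [] with hrs | hrs
    · subst hrs
      have hr : 0 < r := hpos r (by simp)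
      simp only [G, List.append_nil]
      rw [replicate_last r s hr]
      norm_num
    · have hGeq := ih (4 - s) (by omega) hrs (fun x hx => hpos x (by simp [hx]))
      have hGne : G rs (4 - s) ≠ [] := by
        intro hc; rw [hc] at hGeq; simp at hGeq
      simp only [G]
      rw [List.getLast?_append_of_ne_nil _ hGne, hGeq]
      by_cases ho : Odd rs.length
      · simp [ho, Nat.odd_add_one]
      · simp [ho, Nat.odd_add_one]
        omega

/-- For every `n ≥ 1`, the last symbol of the pillar `P n` is `3`
(in particular `P n` is nonempty). -/
theorem pillar_last_eq_three : ∀ n : ℕ, 1 ≤ n → (P n).getLast? = some 3 := by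
  have key : ∀ n : ℕ, 1 ≤ n → (∀ x ∈ P n, x = 1 ∨ x = 3) ∧ Odd (P n).length ∧
      (P n).getLast? = some 3 := by
    intro n hn
    induction n with
    | zero => omega
    | succ m ih =>
      rcases Nat.eq_or_lt_of_le hn with h1 | h1
      · have hm0 : m = 0 := by omega
        subst hm0
        refine ⟨by simp [P], by simp [P], by simp [P]⟩
      · have hm : 1 ≤ m := by omega
        obtain ⟨hmem, hodd, _⟩ := ih hm
        have hP : P (m + 1) = G (P m) 3 := by
          obtain ⟨k, rfl⟩ : ∃ k, m = k + 1 := ⟨m - 1, by omega⟩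
          rfl
        have hne : P m ≠ [] := by
          intro hc; rw [hc] at hodd; simp at hodd
        have hpos : ∀ x ∈ P m, 0 < x := by
          intro x hx; rcases hmem x hx with h | h <;> omega
        have hoddx : ∀ x ∈ P m, x % 2 = 1 := by
          intro x hx; rcases hmem x hx with h | h <;> omega
        refine ⟨?_, ?_, ?_⟩
        · intro x hx
          rw [hP] at hx
          rcases mem_G (P m) 3 x (by norm_num) hx with h | h
          · right; exact h
          · left; omega
        · rw [hP, length_G]
          have := sum_mod_two_s2 (P m) hoddx
          rcases hodd with ⟨k, hk⟩
          refine ⟨((P m).sum - 1) / 2, ?_⟩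
          omega
        · rw [hP, lastG (P m) 3 (by norm_num) hne hpos]
          simp [hodd]
  intro n hn
  exact (key n hn).2.2
end

section
/- Suppose the block densities d_n = c_n/L_n converge to a real limit d with d ≠ 1/2. Then the pillar densities δ_n = o_n/m_n also converge, and their limit equals d. -/
open Filter

/-- count of value `v` at positions of parity `b` (b = true: even positions). -/
def cnt (v : ℕ) : List ℕ → Bool → ℕ
  | [], _ => 0
  | a :: l, b => (if a = v ∧ b = true then 1 else 0) + cnt v l (!b)

def ok (R : List ℕ) : Prop := ∀ x ∈ R, x = 1 ∨ x = 3

lemma ok_G : ∀ (R : List ℕ) (s : ℕ), (s = 1 ∨ s = 3) → ok (G R s) := by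
  intro R
  induction R with
  | nil => intro s _; intro x hx; simp [G] at hx
  | cons r rs ih =>
    intro s hs x hx
    simp only [G, List.mem_append] at hx
    rcases hx with hx | hx
    · rcases List.eq_of_mem_replicate hx with rfl; tauto
    · rcases hs with rfl | rfl
      · exact ih 3 (Or.inr rfl) x hx
      · exact ih 1 (Or.inl rfl) x hx

lemma ok_P : ∀ n, ok (P (n + 1)) := by
  intro n
  induction n with
  | zero => intro x hx; simp [P] at hx; right; exact hx
  | succ k ih => show ok (G (P (k+1)) 3); exact ok_G _ 3 (Or.inr rfl)

theorem cnt_G : ∀ (R : List ℕ), ok R →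
    cnt 3 (G R 3) true = cnt 1 R true + 2 * cnt 3 R true ∧
    cnt 3 (G R 3) false = cnt 3 R true ∧
    cnt 1 (G R 3) true = cnt 3 R false ∧
    cnt 1 (G R 3) false = cnt 1 R false + 2 * cnt 3 R false
  | [], _ => by simp [G, cnt]
  | [r], h => by
    rcases h r (by simp) with rfl | rfl <;> simp [G, cnt, List.replicate]
  | (r1 :: r2 :: rs), h => by
    have h1 := h r1 (by simp)
    have h2 := h r2 (by simp)
    have hrs : ok rs := fun x hx => h x (by simp [hx])
    have IH := cnt_G rs hrs
    obtain ⟨i1, i2, i3, i4⟩ := IH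
    have hG : G (r1 :: r2 :: rs) 3
        = List.replicate r1 3 ++ (List.replicate r2 1 ++ G rs 3) := by
      simp [G]
    rcases h1 with rfl | rfl <;> rcases h2 with rfl | rfl <;>
      simp [hG, List.replicate, cnt, i1, i2, i3, i4] <;> constructor <;> omega

lemma length_cnt : ∀ (l : List ℕ), ok l → ∀ b,
    l.length = cnt 3 l b + cnt 3 l (!b) + cnt 1 l b + cnt 1 l (!b) := by
  intro l
  induction l with
  | nil => intro _ b; simp [cnt]
  | cons a t ih =>
    intro h b
    have ha := h a (by simp)
    have ht : ok t := fun x hx => h x (by simp [hx])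
    have := ih ht (!b)
    rcases ha with rfl | rfl <;> cases b <;>
      simp [cnt, this] <;> omega

lemma count_cnt : ∀ (l : List ℕ), ∀ b,
    l.count 1 = cnt 1 l b + cnt 1 l (!b) := by
  intro l
  induction l with
  | nil => intro b; simp [cnt]
  | cons a t ih =>
    intro b
    have := ih (!b)
    cases b <;> by_cases ha : a = 1 <;>
      simp [cnt, ha, List.count_cons, this] <;> omega


/-- (e3, e1, o3, o1) -/
def qv : ℕ → ℕ × ℕ × ℕ × ℕ
  | 0 => (1, 0, 0, 0)
  | n + 1 =>
    let v := qv n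
    (v.2.1 + 2 * v.1, v.2.2.1, v.1, v.2.2.2 + 2 * v.2.2.1)

lemma qv_P (n : ℕ) :
    cnt 3 (P (n + 1)) true = (qv n).1 ∧
    cnt 1 (P (n + 1)) true = (qv n).2.1 ∧
    cnt 3 (P (n + 1)) false = (qv n).2.2.1 ∧
    cnt 1 (P (n + 1)) false = (qv n).2.2.2 := by
  induction n with
  | zero => simp [P, qv, cnt]
  | succ k ih =>
    obtain ⟨h1, h2, h3, h4⟩ := ih
    have hk := cnt_G (P (k + 1)) (ok_P k)
    obtain ⟨g1, g2, g3, g4⟩ := hk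
    have hP : P (k + 2) = G (P (k + 1)) 3 := rfl
    refine ⟨?_, ?_, ?_, ?_⟩ <;>
      simp [hP, qv, g1, g2, g3, g4, h1, h2, h3, h4] <;> ring

def Eseq (n : ℕ) : ℕ := (qv n).1

lemma Eseq_rec (n : ℕ) : Eseq (n + 3) = 2 * Eseq (n + 2) + Eseq n := by
  simp [Eseq, qv]; ring

lemma qv_o3 (n : ℕ) : (qv (n + 1)).2.2.1 = Eseq n := rfl
lemma qv_e1 (n : ℕ) : (qv (n + 1)).2.1 = (qv n).2.2.1 := rfl
lemma qv_o1 (n : ℕ) : (qv (n + 1)).2.2.2 = (qv n).2.2.2 + 2 * (qv n).2.2.1 := rfl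

lemma mP_eq (n : ℕ) :
    (P (n + 1)).length = (qv n).1 + (qv n).2.2.1 + (qv n).2.1 + (qv n).2.2.2 := by
  obtain ⟨h1, h2, h3, h4⟩ := qv_P n
  have := length_cnt (P (n + 1)) (ok_P n) true
  simp only [Bool.not_true] at this
  omega

lemma oP_eq (n : ℕ) :
    (P (n + 1)).count 1 = (qv n).2.1 + (qv n).2.2.2 := by
  obtain ⟨h1, h2, h3, h4⟩ := qv_P n
  have := count_cnt (P (n + 1)) true
  simp only [Bool.not_true] at this
  omega

lemma B_length (n : ℕ) :
    (B (n + 2)).length = 2 * (B (n + 1)).length + (P (n + 1)).length := by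
  show (B (n+1) ++ P (n+1) ++ B (n+1)).length = _
  simp [List.length_append]; ring

lemma B_count (n : ℕ) :
    (B (n + 2)).count 1 = 2 * (B (n + 1)).count 1 + (P (n + 1)).count 1 := by
  show (B (n+1) ++ P (n+1) ++ B (n+1)).count 1 = _
  simp [List.count_append]; ring


/-- If `x (n+1) = r * x n + g n` with `0 ≤ r < 1` and `g → gl`, then `x → gl / (1 - r)`. -/
lemma tendsto_affine {r : ℝ} (hr0 : 0 ≤ r) (hr : r < 1) {g : ℕ → ℝ} {gl : ℝ}
    (hg : Tendsto g atTop (nhds gl)) (x : ℕ → ℝ)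
    (hx : ∀ n, x (n + 1) = r * x n + g n) :
    Tendsto x atTop (nhds (gl / (1 - r))) := by
  set L := gl / (1 - r) with hL
  have h1r : (0:ℝ) < 1 - r := by linarith
  have hfix : r * L + gl = L := by rw [hL]; field_simp; ring
  set y := fun n => x n - L with hy
  have hyrec : ∀ n, y (n + 1) = r * y n + (g n - gl) := by
    intro n; simp only [hy, hx n]; linarith [hfix]
  have hy0 : Tendsto y atTop (nhds 0) := by
    rw [NormedAddCommGroup.tendsto_nhds_zero]
    intro ε hε
    have hε4 : 0 < ε / 4 * (1 - r) := by positivity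
    have hgN := (NormedAddCommGroup.tendsto_nhds_zero.1
      (by simpa using hg.sub_const gl)) (ε / 4 * (1 - r)) hε4
    rw [eventually_atTop] at hgN
    obtain ⟨N, hN⟩ := hgN
    -- for n ≥ N : |y (N+k)| ≤ r^k * |y N| + ε/4
    have key : ∀ k, |y (N + k)| ≤ r ^ k * |y N| + ε / 4 := by
      intro k
      induction k with
      | zero => simp; positivity
      | succ m ih =>
        have h1 : |y (N + m + 1)| ≤ r * |y (N + m)| + |g (N + m) - gl| := by
          rw [hyrec (N + m)]
          calc |r * y (N + m) + (g (N + m) - gl)|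
              ≤ |r * y (N + m)| + |g (N + m) - gl| := abs_add_le _ _
            _ = r * |y (N + m)| + |g (N + m) - gl| := by
                rw [abs_mul, abs_of_nonneg hr0]
        have h2 : |g (N + m) - gl| ≤ ε / 4 * (1 - r) := by
          have := hN (N + m) (by omega); simpa using this.le
        have h3 : r * |y (N + m)| ≤ r * (r ^ m * |y N| + ε / 4) :=
          mul_le_mul_of_nonneg_left ih hr0
        have : (N + (m+1)) = (N + m) + 1 := by omega
        rw [this]
        calc |y (N + m + 1)| ≤ r * (r ^ m * |y N| + ε / 4) + ε / 4 * (1 - r) := by linarith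
          _ = r ^ (m + 1) * |y N| + (r * (ε/4) + ε / 4 * (1 - r)) := by ring
          _ ≤ r ^ (m + 1) * |y N| + ε / 4 := by nlinarith
    have hpow : Tendsto (fun k => r ^ k * |y N|) atTop (nhds 0) := by
      simpa using (tendsto_pow_atTop_nhds_zero_of_lt_one hr0 hr).mul_const |y N|
    have hK := (NormedAddCommGroup.tendsto_nhds_zero.1 hpow) (ε / 4) (by positivity)
    rw [eventually_atTop] at hK
    obtain ⟨K, hK⟩ := hK
    rw [eventually_atTop]
    refine ⟨N + K, fun n hn => ?_⟩
    have hnk : n = N + (n - N) := by omega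
    have hKn : K ≤ n - N := by omega
    have h5 := hK (n - N) hKn
    have h6 : r ^ (n - N) * |y N| < ε / 4 := by
      calc r ^ (n - N) * |y N| ≤ ‖r ^ (n - N) * |y N|‖ := le_abs_self _
        _ < ε / 4 := h5
    have h7 := key (n - N)
    rw [← hnk] at h7
    calc ‖y n‖ = |y n| := rfl
      _ ≤ r ^ (n - N) * |y N| + ε / 4 := h7
      _ < ε / 4 + ε / 4 := by linarith
      _ < ε := by linarith
  have h := hy0.add_const L
  rw [zero_add] at h
  have hxy : x = fun n => y n + L := by funext n; simp [hy]
  rw [hxy]; exact h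

lemma exists_lam : ∃ l : ℝ, 2 < l ∧ l < 3 ∧ l ^ 3 = 2 * l ^ 2 + 1 := by
  have hcont : ContinuousOn (fun t : ℝ => t ^ 3 - 2 * t ^ 2 - 1) (Set.Icc 2 3) :=
    (continuous_pow 3 |>.sub ((continuous_const.mul (continuous_pow 2))) |>.sub
      continuous_const).continuousOn
  have h0 : (0:ℝ) ∈ Set.Ioo ((fun t : ℝ => t ^ 3 - 2 * t ^ 2 - 1) 2)
      ((fun t : ℝ => t ^ 3 - 2 * t ^ 2 - 1) 3) := by norm_num
  have := intermediate_value_Ioo (by norm_num : (2:ℝ) ≤ 3) hcont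
  obtain ⟨l, hl, hl0⟩ := this h0
  simp only [] at hl0
  exact ⟨l, hl.1, hl.2, by nlinarith [hl0]⟩


/-- For any sequence `E` with `E 0 = 1, E 1 = 2, E 2 = 4`, `E (n+3) = 2E(n+2) + E n`,
and `l` the root of `l³ = 2l² + 1` in `(2,3)`, the quotients `E n / l^n` converge to a
positive limit. -/
lemma E_asymp {l : ℝ} (hl2 : 2 < l) (hl3 : l < 3) (hlc : l ^ 3 = 2 * l ^ 2 + 1)
    (E : ℕ → ℕ) (hE0 : E 0 = 1) (hE1 : E 1 = 2) (hE2 : E 2 = 4)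
    (hErec : ∀ n, E (n + 3) = 2 * E (n + 2) + E n) :
    ∃ cE : ℝ, 0 < cE ∧ Tendsto (fun n => (E n : ℝ) / l ^ n) atTop (nhds cE) := by
  have hl0 : (0:ℝ) < l := by linarith
  have hlne : l ≠ 0 := ne_of_gt hl0
  set w : ℕ → ℝ := fun n => (E (n + 1) : ℝ) - l * E n with hw
  have hwrec : ∀ n, w (n + 2) = (2 - l) * w (n + 1) + (2 * l - l ^ 2) * w n := by
    intro n
    simp only [hw]
    have h3 := hErec n
    push_cast [h3]
    linear_combination (-(E n : ℝ)) * hlc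
  set M : ℝ := 2 * (l - 2) with hM
  have hM0 : 0 < M := by simp [hM]; linarith
  have hfact : (l - 2) + (l ^ 2 - 2 * l) ≤ 1 := by nlinarith
  have hwbd : ∀ n, |w n| ≤ M ∧ |w (n + 1)| ≤ M := by
    intro n
    induction n with
    | zero =>
      constructor
      · show |(E 1 : ℝ) - l * E 0| ≤ M
        rw [hE0, hE1]
        rw [abs_of_nonpos (by push_cast; linarith)]
        push_cast; simp [hM]; linarith
      · show |(E 2 : ℝ) - l * E 1| ≤ M
        rw [hE1, hE2]
        rw [abs_of_nonpos (by push_cast; linarith)]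
        push_cast; simp [hM]; linarith
    | succ m ih =>
      obtain ⟨ih1, ih2⟩ := ih
      refine ⟨ih2, ?_⟩
      rw [hwrec m]
      calc |(2 - l) * w (m + 1) + (2 * l - l ^ 2) * w m|
          ≤ |(2 - l) * w (m + 1)| + |(2 * l - l ^ 2) * w m| := abs_add_le _ _
        _ = (l - 2) * |w (m + 1)| + (l ^ 2 - 2 * l) * |w m| := by
            rw [abs_mul, abs_mul]
            have e1 : |2 - l| = l - 2 := by
              rw [abs_of_nonpos (by linarith)]; ring
            have e2 : |2 * l - l ^ 2| = l ^ 2 - 2 * l := by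
              rw [abs_of_nonpos (by nlinarith)]; ring
            rw [e1, e2]
        _ ≤ (l - 2) * M + (l ^ 2 - 2 * l) * M := by
            gcongr <;> nlinarith
        _ = ((l - 2) + (l ^ 2 - 2 * l)) * M := by ring
        _ ≤ 1 * M := by
            apply mul_le_mul_of_nonneg_right hfact (le_of_lt hM0)
        _ = M := one_mul M
  set u : ℕ → ℝ := fun k => w k / l ^ (k + 1) with hu
  have hubd : ∀ k, ‖u k‖ ≤ (M / l) * (1 / l) ^ k := by
    intro k
    simp only [hu, norm_div, Real.norm_eq_abs]
    have hpk : (0:ℝ) < l ^ (k + 1) := by positivity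
    rw [abs_pow, abs_of_pos hl0, div_le_iff₀ hpk]
    have heq : M / l * (1 / l) ^ k * l ^ (k + 1) = M := by
      field_simp [pow_succ]
      rw [one_div, inv_pow, pow_succ]; field_simp
    rw [heq]
    exact (hwbd k).1
  have hgeo : Summable (fun k : ℕ => (M / l) * (1 / l) ^ k) := by
    apply Summable.mul_left
    apply summable_geometric_of_lt_one (by positivity)
    rw [div_lt_one hl0]; linarith
  have husumm : Summable u := Summable.of_norm_bounded hgeo hubd
  set S : ℝ := ∑' k, u k with hS
  have hSbd : |S| ≤ M / (l - 1) := by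
    have h1 : ‖S‖ ≤ ∑' k, (M / l) * (1 / l) ^ k := by
      apply tsum_of_norm_bounded hgeo.hasSum hubd
    have h2 : ∑' k : ℕ, (M / l) * (1 / l) ^ k = M / (l - 1) := by
      rw [tsum_mul_left, tsum_geometric_of_lt_one (by positivity)
        (by rw [div_lt_one hl0]; linarith)]
      have e : (1 - 1 / l) = (l - 1) / l := by field_simp
      rw [e, inv_div, div_mul_div_comm, mul_comm M l, mul_div_mul_left _ _ hlne]
    rw [h2] at h1
    exact h1
  -- partial sums
  have hxsum : ∀ n, (E n : ℝ) / l ^ n = 1 + ∑ k ∈ Finset.range n, u k := by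
    intro n
    induction n with
    | zero => simp [hE0]
    | succ m ih =>
      rw [Finset.sum_range_succ, ← add_assoc, ← ih]
      simp only [hu, hw]
      field_simp
      ring
  refine ⟨1 + S, ?_, ?_⟩
  · have hMl : M / (l - 1) < 1 := by
      rw [div_lt_one (by linarith)]
      simp [hM]; linarith
    have := abs_le.1 hSbd
    linarith
  · have := husumm.hasSum.tendsto_sum_nat
    have h2 : Tendsto (fun n => 1 + ∑ k ∈ Finset.range n, u k) atTop (nhds (1 + S)) := by
      exact (this.const_add 1)
    apply h2.congr
    intro n
    rw [hxsum n]

lemma B_len_pos : ∀ n, 0 < (B (n + 1)).length := by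
  intro n
  induction n with
  | zero => decide
  | succ k ih => rw [B_length k]; omega

lemma P_len_pos : ∀ n, 0 < (P (n + 1)).length := by
  intro n
  induction n with
  | zero => decide
  | succ k ih =>
    show 0 < (G (P (k + 1)) 3).length
    obtain ⟨a, t, hat⟩ : ∃ a t, P (k + 1) = a :: t := by
      cases h : P (k + 1) with
      | nil => rw [h] at ih; simp at ih
      | cons a t => exact ⟨a, t, rfl⟩
    have ha : a = 1 ∨ a = 3 := ok_P k a (by rw [hat]; simp)
    rw [hat]
    show 0 < (List.replicate a 3 ++ G t (4 - 3)).length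
    rw [List.length_append, List.length_replicate]
    omega

/-- If the block densities `d n = c n / L n` converge to `d ≠ 1/2`, then the pillar
densities `δ n = o n / m n` also converge, with the same limit `d`. -/
theorem pillar_density_limit (d : ℝ)
    (hlim : Filter.Tendsto
      (fun n => ((B n).count 1 : ℝ) / ((B n).length : ℝ)) Filter.atTop (nhds d))
    (hd : d ≠ 1 / 2) :
    Filter.Tendsto
      (fun n => ((P n).count 1 : ℝ) / ((P n).length : ℝ)) Filter.atTop (nhds d) := by
  obtain ⟨l, hl2, hl3, hlc⟩ := exists_lam
  have hl0 : (0:ℝ) < l := by linarith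
  have hlne : l ≠ 0 := ne_of_gt hl0
  have hpow : ∀ n : ℕ, (0:ℝ) < l ^ n := fun n => pow_pos hl0 n
  obtain ⟨cE, hcE, hE⟩ := E_asymp hl2 hl3 hlc Eseq rfl rfl rfl Eseq_rec
  -- o3 component
  set o3 : ℕ → ℕ := fun n => (qv n).2.2.1 with ho3
  set e1 : ℕ → ℕ := fun n => (qv n).2.1 with he1
  set o1 : ℕ → ℕ := fun n => (qv n).2.2.2 with ho1
  have ho3succ : ∀ n, o3 (n + 1) = Eseq n := fun n => rfl
  have he1succ : ∀ n, e1 (n + 1) = o3 n := fun n => rfl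
  have ho1succ : ∀ n, o1 (n + 1) = o1 n + 2 * o3 n := fun n => rfl
  -- limit of o3 n / l^n
  have hO3 : Tendsto (fun n => (o3 n : ℝ) / l ^ n) atTop (nhds (cE / l)) := by
    rw [← tendsto_add_atTop_iff_nat 1]
    have h1 : Tendsto (fun n => ((Eseq n : ℝ) / l ^ n) / l) atTop (nhds (cE / l)) :=
      hE.div_const l
    apply h1.congr
    intro n
    rw [ho3succ n, pow_succ]
    field_simp
  have hE1 : Tendsto (fun n => (e1 n : ℝ) / l ^ n) atTop (nhds (cE / l / l)) := by
    rw [← tendsto_add_atTop_iff_nat 1]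
    have h1 : Tendsto (fun n => ((o3 n : ℝ) / l ^ n) / l) atTop (nhds (cE / l / l)) :=
      hO3.div_const l
    apply h1.congr
    intro n
    rw [he1succ n, pow_succ]
    field_simp
  -- affine recursion for o1
  have hg : Tendsto (fun n => 2 * ((o3 n : ℝ) / l ^ n) / l) atTop
      (nhds (2 * (cE / l) / l)) := (hO3.const_mul 2).div_const l
  have hO1 : Tendsto (fun n => (o1 n : ℝ) / l ^ n) atTop
      (nhds ((2 * (cE / l) / l) / (1 - 1 / l))) := by
    apply tendsto_affine (by positivity) (by rw [div_lt_one hl0]; linarith) hg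
    intro n
    rw [ho1succ n, pow_succ]
    push_cast
    field_simp
  set cO1 : ℝ := (2 * (cE / l) / l) / (1 - 1 / l) with hcO1
  have h2l : (0:ℝ) < 1 - 1 / l := by
    rw [sub_pos, div_lt_one hl0]; linarith
  have hcO1pos : 0 < cO1 := by
    apply div_pos _ h2l
    positivity
  -- m and o limits
  set cm : ℝ := cE + cE / l + cE / l / l + cO1 with hcm
  set co : ℝ := cE / l / l + cO1 with hco
  have hcmpos : 0 < cm := by
    have : 0 < cE / l := by positivity
    have : 0 < cE / l / l := by positivity
    simp only [hcm]; linarith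
  have hcopos : 0 < co := by
    have : 0 < cE / l / l := by positivity
    simp only [hco]; linarith
  have hm : Tendsto (fun n => ((P (n + 1)).length : ℝ) / l ^ n) atTop (nhds cm) := by
    have h := ((hE.add hO3).add hE1).add hO1
    apply h.congr
    intro n
    rw [mP_eq n]
    push_cast
    field_simp
    rfl
  have ho : Tendsto (fun n => ((P (n + 1)).count 1 : ℝ) / l ^ n) atTop (nhds co) := by
    have h := hE1.add hO1
    apply h.congr
    intro n
    rw [oP_eq n]
    push_cast
    field_simp
    rfl
  -- block length and count limits
  have hgL : Tendsto (fun n => (((P (n + 1)).length : ℝ) / l ^ n) / l ^ 2) atTop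
      (nhds (cm / l ^ 2)) := hm.div_const (l ^ 2)
  have hr2 : (0:ℝ) ≤ 2 / l := by positivity
  have hr2' : 2 / l < 1 := by rw [div_lt_one hl0]; linarith
  have hL : Tendsto (fun n => ((B (n + 1)).length : ℝ) / l ^ (n + 1)) atTop
      (nhds ((cm / l ^ 2) / (1 - 2 / l))) := by
    apply tendsto_affine hr2 hr2' hgL
    intro n
    rw [B_length n]
    push_cast
    rw [pow_succ, pow_succ]
    field_simp
  have hgC : Tendsto (fun n => (((P (n + 1)).count 1 : ℝ) / l ^ n) / l ^ 2) atTop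
      (nhds (co / l ^ 2)) := ho.div_const (l ^ 2)
  have hC : Tendsto (fun n => ((B (n + 1)).count 1 : ℝ) / l ^ (n + 1)) atTop
      (nhds ((co / l ^ 2) / (1 - 2 / l))) := by
    apply tendsto_affine hr2 hr2' hgC
    intro n
    rw [B_count n]
    push_cast
    rw [pow_succ, pow_succ]
    field_simp
  set cL : ℝ := (cm / l ^ 2) / (1 - 2 / l) with hcL
  set cC : ℝ := (co / l ^ 2) / (1 - 2 / l) with hcC
  have h2l' : (0:ℝ) < 1 - 2 / l := by linarith
  have hcLpos : 0 < cL := by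
    apply div_pos _ h2l'
    positivity
  -- block density limit
  have hdlim : Tendsto (fun n => ((B (n + 1)).count 1 : ℝ) / ((B (n + 1)).length : ℝ))
      atTop (nhds (cC / cL)) := by
    have h := hC.div hL (ne_of_gt hcLpos)
    apply h.congr
    intro n
    simp only [Pi.div_apply]
    rw [div_div_div_cancel_right₀ (ne_of_gt (hpow (n + 1)))]
  have hlim' : Tendsto (fun n => ((B (n + 1)).count 1 : ℝ) / ((B (n + 1)).length : ℝ))
      atTop (nhds d) := by
    exact hlim.comp (tendsto_add_atTop_nat 1)
  have hdeq : d = cC / cL := tendsto_nhds_unique hlim' hdlim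
  -- pillar density limit
  have hδ : Tendsto (fun n => ((P (n + 1)).count 1 : ℝ) / ((P (n + 1)).length : ℝ))
      atTop (nhds (co / cm)) := by
    have h := ho.div hm (ne_of_gt hcmpos)
    apply h.congr
    intro n
    simp only [Pi.div_apply]
    rw [div_div_div_cancel_right₀ (ne_of_gt (hpow n))]
  have hratio : cC / cL = co / cm := by
    rw [hcC, hcL, div_div_div_cancel_right₀ (ne_of_gt h2l'),
      div_div_div_cancel_right₀ (ne_of_gt (pow_pos hl0 2))]
  rw [hdeq, hratio]
  exact (tendsto_add_atTop_iff_nat 1).1 hδ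
end
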